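/- Let T be a spanning tree of Kₙ and p, q distinct vertices each of degree at least 2 in T. Then {p,q} ∈ E(T) if and only if there exists a spanning tree T' of Kₙ with |E(T) △ E(T')| = 2 such that deg_{T'}(p) = deg_T(p) - 1 and deg_{T'}(q) = deg_T(q) - 1. -/

import Mathlib

open SimpleGraph

theorem stmt_11 (n : ℕ) (hn : 4 ≤ n) (T : SimpleGraph (Fin n)) (hT : T.IsTree)
    (p q : Fin n) (hpq : p ≠ q)
    (hp : 2 ≤ (T.neighborSet p).ncard) (hq : 2 ≤ (T.neighborSet q).ncard) :
    T.Adj p q ↔ ∃ T' : SimpleGraph (Fin n), T'.IsTree ∧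
      (symmDiff T.edgeSet T'.edgeSet).ncard = 2 ∧
      (T'.neighborSet p).ncard = (T.neighborSet p).ncard - 1 ∧
      (T'.neighborSet q).ncard = (T.neighborSet q).ncard - 1 := by
  classical
  have hTconn := hT.isConnected
  have hTacyc := hT.2
  constructor
  · intro h
    -- choose a neighbor of p other than q
    have hane : (T.neighborSet p \ {q}).Nonempty := by
      rw [Set.nonempty_iff_ne_empty]
      intro h0
      rw [Set.diff_eq_empty] at h0
      have := Set.ncard_le_ncard h0 (Set.finite_singleton q)
      rw [Set.ncard_singleton] at this
      omega
    obtain ⟨a, ha, haq⟩ := hane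
    rw [Set.mem_singleton_iff] at haq
    rw [mem_neighborSet] at ha
    have hbne : (T.neighborSet q \ {p}).Nonempty := by
      rw [Set.nonempty_iff_ne_empty]
      intro h0
      rw [Set.diff_eq_empty] at h0
      have := Set.ncard_le_ncard h0 (Set.finite_singleton p)
      rw [Set.ncard_singleton] at this
      omega
    obtain ⟨b, hb, hbp⟩ := hbne
    rw [Set.mem_singleton_iff] at hbp
    rw [mem_neighborSet] at hb
    have hap : a ≠ p := ha.ne'
    have hbq : b ≠ q := hb.ne'
    -- pq is a bridge of T
    have hbr : T.IsBridge s(p, q) := (isAcyclic_iff_forall_adj_isBridge.mp hTacyc) h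
    set S : SimpleGraph (Fin n) := T \ fromEdgeSet {s(p, q)} with hSdef
    have hSadj : ∀ x y, S.Adj x y ↔ T.Adj x y ∧ s(x, y) ≠ s(p, q) := by
      intro x y
      rw [hSdef, sdiff_adj, fromEdgeSet_adj]
      constructor
      · rintro ⟨h1, h2⟩
        exact ⟨h1, fun hc => h2 ⟨Set.mem_singleton_iff.mpr hc, h1.ne⟩⟩
      · rintro ⟨h1, h2⟩
        exact ⟨h1, fun hc => h2 (Set.mem_singleton_iff.mp hc.1)⟩
    have hnr : ¬ S.Reachable p q := isBridge_iff.mp hbr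
    have hSpa : S.Adj p a := (hSadj p a).mpr ⟨ha, fun hc => haq (Sym2.congr_right.mp hc)⟩
    have hSqb : S.Adj q b := by
      refine (hSadj q b).mpr ⟨hb, fun hc => ?_⟩
      rw [Sym2.eq_iff] at hc
      rcases hc with ⟨h1, h2⟩ | ⟨h1, h2⟩
      · exact hpq h1.symm
      · exact hbp h2
    have hab : a ≠ b := by
      rintro rfl
      exact hnr (hSpa.reachable.trans hSqb.reachable.symm)
    have hnab : ¬ T.Adj a b := by
      intro h2
      have hSab : S.Adj a b := by
        refine (hSadj a b).mpr ⟨h2, fun hc => ?_⟩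
        rw [Sym2.eq_iff] at hc
        rcases hc with ⟨h3, h4⟩ | ⟨h3, h4⟩
        · exact hap h3
        · exact haq h3
      exact hnr (hSpa.reachable.trans (hSab.reachable.trans hSqb.reachable.symm))
    have hef : s(p, q) ≠ s(a, b) := by
      intro hc
      rw [Sym2.eq_iff] at hc
      rcases hc with ⟨h1, h2⟩ | ⟨h1, h2⟩
      · exact hap h1.symm
      · exact hbp h1.symm
    set T' : SimpleGraph (Fin n) := fromEdgeSet ((T.edgeSet \ {s(p, q)}) ∪ {s(a, b)})
      with hT'def
    have hT'adj : ∀ x y, T'.Adj x y ↔ ((T.Adj x y ∧ s(x, y) ≠ s(p, q)) ∨ s(x, y) = s(a, b)) := by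
      intro x y
      rw [hT'def, fromEdgeSet_adj]
      simp only [Set.mem_union, Set.mem_diff, Set.mem_singleton_iff, mem_edgeSet]
      constructor
      · tauto
      · rintro (⟨h1, h2⟩ | h1)
        · exact ⟨Or.inl ⟨h1, h2⟩, h1.ne⟩
        · refine ⟨Or.inr h1, ?_⟩
          rintro rfl
          rw [Sym2.eq_iff] at h1
          rcases h1 with ⟨rfl, rfl⟩ | ⟨rfl, rfl⟩ <;> exact hab rfl
    have hT'pa : T'.Adj p a :=
      (hT'adj p a).mpr (Or.inl ⟨ha, fun hc => haq (Sym2.congr_right.mp hc)⟩)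
    have hT'ab : T'.Adj a b := (hT'adj a b).mpr (Or.inr rfl)
    have hT'bq : T'.Adj b q := by
      refine (hT'adj b q).mpr (Or.inl ⟨hb.symm, fun hc => ?_⟩)
      rw [Sym2.eq_iff] at hc
      rcases hc with ⟨h1, h2⟩ | ⟨h1, h2⟩
      · exact hbp h1
      · exact hpq h2.symm
    have hT'e : T'.edgeSet = (T.edgeSet \ {s(p, q)}) ∪ {s(a, b)} := by
      rw [hT'def, edgeSet_fromEdgeSet]
      apply sdiff_eq_left.mpr
      rw [Set.disjoint_left]
      intro e he2 he1
      rcases he2 with ⟨he2, -⟩ | he2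
      · exact (SimpleGraph.not_isDiag_of_mem_edgeSet T he2) he1
      · rw [Set.mem_singleton_iff] at he2
        subst he2
        simp only [Sym2.mem_diagSet, Sym2.isDiag_iff_proj_eq] at he1
        exact hab he1
    have hconn : T'.Connected := by
      have key : ∀ u v, T.Adj u v → T'.Reachable u v := by
        intro u v huv
        by_cases hc : s(u, v) = s(p, q)
        · have hpq' : T'.Reachable p q :=
            hT'pa.reachable.trans (hT'ab.reachable.trans hT'bq.reachable)
          rw [Sym2.eq_iff] at hc
          rcases hc with ⟨rfl, rfl⟩ | ⟨rfl, rfl⟩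
          · exact hpq'
          · exact hpq'.symm
        · exact ((hT'adj u v).mpr (Or.inl ⟨huv, hc⟩)).reachable
      rw [connected_iff]
      refine ⟨fun x y => ?_, ⟨p⟩⟩
      obtain ⟨w⟩ := hTconn.preconnected x y
      induction w with
      | nil => exact Reachable.refl _
      | cons hadj _ ih => exact (key _ _ hadj).trans ih
    have hacyc : T'.IsAcyclic := by
      intro v c hc
      by_cases hf : s(a, b) ∈ c.edges
      · have hre : (T' \ fromEdgeSet {s(a, b)}).Reachable a b := by
          by_contra hre
          have hbrab : T'.IsBridge s(a, b) := isBridge_iff.mpr hre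
          rw [isBridge_iff_mem_and_forall_cycle_notMem hT'ab] at hbrab
          exact hbrab c hc hf
        have hle : T' \ fromEdgeSet {s(a, b)} ≤ S := by
          intro x y hxy
          rw [sdiff_adj] at hxy
          obtain ⟨hxy1, hxy2⟩ := hxy
          rcases (hT'adj x y).mp hxy1 with h1 | h1
          · exact (hSadj x y).mpr h1
          · exact absurd ((fromEdgeSet_adj _).mpr ⟨Set.mem_singleton_iff.mpr h1, hxy1.ne⟩) hxy2
        exact hnr (hSpa.reachable.trans ((hre.mono hle).trans hSqb.reachable.symm))
      · have hsub : ∀ e ∈ c.edges, e ∈ T.edgeSet := by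
          intro e he
          have hmem := c.edges_subset_edgeSet he
          rw [hT'e] at hmem
          rcases hmem with ⟨hm, -⟩ | hm
          · exact hm
          · rw [Set.mem_singleton_iff] at hm
            exact absurd (hm ▸ he) hf
        exact hTacyc (c.transfer T hsub) (hc.transfer hsub)
    have hnp : T'.neighborSet p = T.neighborSet p \ {q} := by
      ext x
      simp only [mem_neighborSet, Set.mem_diff, Set.mem_singleton_iff]
      rw [hT'adj]
      constructor
      · rintro (⟨h1, h2⟩ | h1)
        · exact ⟨h1, fun hx => h2 (by rw [hx])⟩
        · exfalso
          rw [Sym2.eq_iff] at h1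
          rcases h1 with ⟨h3, h4⟩ | ⟨h3, h4⟩
          · exact hap h3.symm
          · exact hbp h3.symm
      · rintro ⟨h1, h2⟩
        exact Or.inl ⟨h1, fun hc => h2 (Sym2.congr_right.mp hc)⟩
    have hnq : T'.neighborSet q = T.neighborSet q \ {p} := by
      ext x
      simp only [mem_neighborSet, Set.mem_diff, Set.mem_singleton_iff]
      rw [hT'adj]
      constructor
      · rintro (⟨h1, h2⟩ | h1)
        · refine ⟨h1, fun hx => h2 ?_⟩
          subst hx
          rw [Sym2.eq_iff]
          tauto
        · exfalso
          rw [Sym2.eq_iff] at h1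
          rcases h1 with ⟨h3, h4⟩ | ⟨h3, h4⟩
          · exact haq h3.symm
          · exact hbq h3.symm
      · rintro ⟨h1, h2⟩
        refine Or.inl ⟨h1, fun hc => h2 ?_⟩
        rw [Sym2.eq_iff] at hc
        rcases hc with ⟨h3, h4⟩ | ⟨h3, h4⟩
        · exact absurd h3.symm hpq
        · exact h4
    refine ⟨T', ⟨hconn, hacyc⟩, ?_, ?_, ?_⟩
    · have : symmDiff T.edgeSet T'.edgeSet = {s(p, q), s(a, b)} := by
        rw [hT'e, Set.symmDiff_def]
        ext e
        simp only [Set.mem_union, Set.mem_diff, Set.mem_singleton_iff, Set.mem_insert_iff,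
          Set.mem_singleton_iff]
        constructor
        · rintro (⟨h1, h2⟩ | ⟨h1, h2⟩)
          · left
            by_contra hne
            exact h2 (Or.inl ⟨h1, fun hc => hne hc⟩)
          · rcases h1 with ⟨h3, h4⟩ | h3
            · exact absurd h3 h2
            · exact Or.inr h3
        · rintro (rfl | rfl)
          · left
            refine ⟨h, ?_⟩
            rintro (⟨-, h3⟩ | h3)
            · exact h3 rfl
            · exact hef h3
          · right
            refine ⟨Or.inr rfl, fun hc => hnab ?_⟩
            rwa [← mem_edgeSet]
      rw [this]
      exact Set.ncard_pair hef
    · have hqm : q ∈ T.neighborSet p := h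
      rw [hnp, Set.ncard_diff_singleton_of_mem hqm]
    · have hpm : p ∈ T.neighborSet q := h.symm
      rw [hnq, Set.ncard_diff_singleton_of_mem hpm]
  · rintro ⟨T', hT', hsd, hdp, hdq⟩
    have hedge : ∀ G : SimpleGraph (Fin n), G.IsTree → G.edgeSet.ncard + 1 = n := by
      intro G hG
      have f1 : Fintype G.edgeSet := Fintype.ofFinite _
      have hc := hG.card_edgeFinset
      rw [Fintype.card_fin] at hc
      have h2 := Set.ncard_coe_finset G.edgeFinset
      rw [coe_edgeFinset] at h2
      omega
    have hcT := hedge T hT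
    have hcT' := hedge T' hT'
    set A := T.edgeSet \ T'.edgeSet with hA
    set B := T'.edgeSet \ T.edgeSet with hB
    have hAB : A.ncard + B.ncard = 2 := by
      rw [Set.symmDiff_def] at hsd
      rwa [Set.ncard_union_eq disjoint_sdiff_sdiff (Set.toFinite _) (Set.toFinite _)] at hsd
    have hABeq : A.ncard = B.ncard := by
      have := (Set.ncard_eq_ncard_iff_ncard_diff_eq_ncard_diff (s := T.edgeSet)
        (t := T'.edgeSet) (Set.toFinite _) (Set.toFinite _)).mp (by omega)
      exact this
    have hA1 : A.ncard = 1 := by omega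
    obtain ⟨e0, he0⟩ := Set.ncard_eq_one.mp hA1
    have hgen : ∀ r : Fin n, 2 ≤ (T.neighborSet r).ncard →
        (T'.neighborSet r).ncard = (T.neighborSet r).ncard - 1 → ∃ x, s(r, x) ∈ A := by
      intro r h2 h1
      by_contra hc
      push_neg at hc
      have hsub : T.neighborSet r ⊆ T'.neighborSet r := by
        intro x hx
        rw [mem_neighborSet, ← mem_edgeSet] at hx ⊢
        have h3 := hc x
        rw [hA, Set.mem_diff] at h3
        push_neg at h3
        exact h3 hx
      have := Set.ncard_le_ncard hsub (Set.toFinite _)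
      omega
    obtain ⟨x, hx⟩ := hgen p hp hdp
    obtain ⟨y, hy⟩ := hgen q hq hdq
    rw [he0, Set.mem_singleton_iff] at hx hy
    have hxy : s(p, x) = s(q, y) := hx.trans hy.symm
    rw [Sym2.eq_iff] at hxy
    rcases hxy with ⟨h1, h2⟩ | ⟨h1, h2⟩
    · exact absurd h1 hpq
    · rw [← h2]
      have hmem : s(p, x) ∈ A := by rw [he0, Set.mem_singleton_iff]; exact hx
      rw [hA, Set.mem_diff, mem_edgeSet] at hmem
      exact hmem.1
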